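/- For every real k with 0 < k² < 1, letting k' = sqrt(1-k²), one has ∫₀¹ x·arccos(x)/sqrt(k'² + k²x²) dx = (1/k²)·(E(k) - (π/2)·k'). -/

import Mathlib

open Real Set MeasureTheory

lemma sin_image : Real.sin '' Set.Ioo 0 (π/2) = Set.Ioo (0:ℝ) 1 := by
  ext x
  constructor
  · rintro ⟨θ, ⟨h0, h1⟩, rfl⟩
    have hπ := Real.pi_pos
    constructor
    · exact Real.sin_pos_of_pos_of_lt_pi h0 (by linarith)
    · calc Real.sin θ < Real.sin (π/2) := by
            apply Real.strictMonoOn_sin ⟨by linarith, by linarith⟩ ⟨by linarith, le_refl _⟩ h1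
        _ = 1 := Real.sin_pi_div_two
  · rintro ⟨h0, h1⟩
    refine ⟨Real.arcsin x, ⟨?_, ?_⟩, Real.sin_arcsin (by linarith) (by linarith)⟩
    · exact Real.arcsin_pos.2 h0
    · exact Real.arcsin_lt_pi_div_two.2 h1

lemma cos_image : Real.cos '' Set.Ioo 0 (π/2) = Set.Ioo (0:ℝ) 1 := by
  ext x
  constructor
  · rintro ⟨θ, ⟨h0, h1⟩, rfl⟩
    have hπ := Real.pi_pos
    refine ⟨Real.cos_pos_of_mem_Ioo ⟨by linarith, h1⟩, ?_⟩
    calc Real.cos θ < Real.cos 0 := by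
          apply Real.strictAntiOn_cos ⟨by linarith, by linarith⟩ ⟨by linarith, by linarith⟩ h0
      _ = 1 := Real.cos_zero
  · rintro ⟨h0, h1⟩
    refine ⟨Real.arccos x, ⟨?_, ?_⟩, Real.cos_arccos (by linarith) (by linarith)⟩
    · exact Real.arccos_pos.2 h1
    · exact Real.arccos_lt_pi_div_two.2 h0

lemma inj_sin : Set.InjOn Real.sin (Set.Ioo 0 (π/2)) := by
  apply Real.injOn_sin.mono
  intro x hx
  rw [Set.mem_Ioo] at hx
  rw [Set.mem_Icc]
  constructor
  · nlinarith [hx.1, Real.pi_pos]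
  · exact hx.2.le

lemma inj_cos : Set.InjOn Real.cos (Set.Ioo 0 (π/2)) := by
  apply Real.injOn_cos.mono
  intro x hx
  rw [Set.mem_Ioo] at hx
  rw [Set.mem_Icc]
  constructor
  · exact hx.1.le
  · nlinarith [hx.2, Real.pi_pos]

lemma key_nonneg {k θ : ℝ} (hk1 : k^2 < 1) : 0 ≤ 1 - k^2 * Real.sin θ^2 := by
  nlinarith [Real.sin_sq_le_one θ, sq_nonneg k, sq_nonneg (Real.sin θ)]

lemma subE (k : ℝ) (hk1 : k^2 < 1) :
    ∫ x in Set.Ioo (0:ℝ) 1, Real.sqrt ((1 - k^2*x^2)/(1-x^2)) =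
    ∫ θ in Set.Ioo (0:ℝ) (π/2), Real.sqrt (1 - k^2 * Real.sin θ^2) := by
  rw [← sin_image, integral_image_eq_integral_abs_deriv_smul measurableSet_Ioo
      (fun θ _ => (Real.hasDerivAt_sin θ).hasDerivWithinAt) inj_sin]
  apply setIntegral_congr_fun measurableSet_Ioo
  intro θ hθ
  have hπ := Real.pi_pos
  have hc : 0 < Real.cos θ := Real.cos_pos_of_mem_Ioo ⟨by linarith [hθ.1], hθ.2⟩
  have h1 : 1 - Real.sin θ^2 = Real.cos θ^2 := by
    have := Real.sin_sq_add_cos_sq θ; linarith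
  simp only [smul_eq_mul, abs_of_pos hc, h1]
  rw [Real.sqrt_div (key_nonneg hk1), Real.sqrt_sq hc.le]
  field_simp

lemma subG (k : ℝ) (hk1 : k^2 < 1) :
    ∫ x in Set.Ioo (0:ℝ) 1, Real.sqrt ((1 - k^2 + k^2*x^2)/(1-x^2)) =
    ∫ θ in Set.Ioo (0:ℝ) (π/2), Real.sqrt (1 - k^2 * Real.sin θ^2) := by
  rw [← cos_image, integral_image_eq_integral_abs_deriv_smul measurableSet_Ioo
      (fun θ _ => (Real.hasDerivAt_cos θ).hasDerivWithinAt) inj_cos]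
  apply setIntegral_congr_fun measurableSet_Ioo
  intro θ hθ
  have hπ := Real.pi_pos
  have hs : 0 < Real.sin θ := Real.sin_pos_of_pos_of_lt_pi hθ.1 (by linarith [hθ.2])
  have h1 : 1 - Real.cos θ^2 = Real.sin θ^2 := by
    have := Real.sin_sq_add_cos_sq θ; linarith
  have h2 : 1 - k^2 + k^2 * Real.cos θ^2 = 1 - k^2 * Real.sin θ^2 := by
    have := Real.sin_sq_add_cos_sq θ; nlinarith
  simp only [smul_eq_mul, abs_neg, abs_of_pos hs, h1, h2]
  rw [Real.sqrt_div (key_nonneg hk1), Real.sqrt_sq hs.le]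
  field_simp

lemma intG (k : ℝ) (hk1 : k^2 < 1) :
    IntegrableOn (fun x => Real.sqrt ((1 - k^2 + k^2*x^2)/(1-x^2))) (Set.Ioo (0:ℝ) 1) := by
  rw [← cos_image, integrableOn_image_iff_integrableOn_abs_deriv_smul measurableSet_Ioo
      (fun θ _ => (Real.hasDerivAt_cos θ).hasDerivWithinAt) inj_cos]
  have hcont : Continuous (fun θ : ℝ => Real.sqrt (1 - k^2 * Real.sin θ^2)) :=
    (continuous_const.sub (continuous_const.mul (Real.continuous_sin.pow 2))).sqrt
  apply MeasureTheory.Integrable.congr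
    (f := fun θ => Real.sqrt (1 - k^2 * Real.sin θ^2))
  · exact (hcont.integrableOn_Icc (a := 0) (b := π/2)).mono_set Set.Ioo_subset_Icc_self
  · filter_upwards [ae_restrict_mem measurableSet_Ioo] with θ hθ
    have hπ := Real.pi_pos
    have hs : 0 < Real.sin θ := Real.sin_pos_of_pos_of_lt_pi hθ.1 (by linarith [hθ.2])
    have h1 : 1 - Real.cos θ^2 = Real.sin θ^2 := by
      have := Real.sin_sq_add_cos_sq θ; linarith
    have h2 : 1 - k^2 + k^2 * Real.cos θ^2 = 1 - k^2 * Real.sin θ^2 := by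
      have := Real.sin_sq_add_cos_sq θ; nlinarith
    simp only [smul_eq_mul, abs_neg, abs_of_pos hs, h1, h2]
    rw [Real.sqrt_div (key_nonneg hk1), Real.sqrt_sq hs.le]
    field_simp

theorem stmt_11 (k : ℝ) (hk0 : 0 < k ^ 2) (hk1 : k ^ 2 < 1) :
    ∫ x in (0:ℝ)..1, x * Real.arccos x /
        Real.sqrt (Real.sqrt (1 - k ^ 2) ^ 2 + k ^ 2 * x ^ 2) =
      (1 / k ^ 2) * ((∫ x in (0:ℝ)..1, Real.sqrt ((1 - k ^ 2 * x ^ 2) / (1 - x ^ 2))) -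
        (Real.pi / 2) * Real.sqrt (1 - k ^ 2)) := by
  have hk2 : (k:ℝ) ^ 2 ≠ 0 := ne_of_gt hk0
  have h1k : (0:ℝ) < 1 - k ^ 2 := by linarith
  rw [Real.sq_sqrt h1k.le]
  have hupos : ∀ x : ℝ, 0 < 1 - k ^ 2 + k ^ 2 * x ^ 2 := by
    intro x; nlinarith [sq_nonneg (k * x), sq_nonneg k, sq_nonneg x, mul_pow k x 2]
  set I : ℝ → ℝ := fun x => x * Real.arccos x / Real.sqrt (1 - k ^ 2 + k ^ 2 * x ^ 2) with hI
  set g : ℝ → ℝ := fun x =>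
    Real.sqrt (1 - k ^ 2 + k ^ 2 * x ^ 2) / (k ^ 2 * Real.sqrt (1 - x ^ 2)) with hg
  set φ : ℝ → ℝ := fun x => I x - g x with hφ
  set F : ℝ → ℝ := fun x =>
    Real.arccos x * Real.sqrt (1 - k ^ 2 + k ^ 2 * x ^ 2) / k ^ 2 with hF
  -- derivative
  have hFderiv : ∀ x ∈ Set.Ioo (0:ℝ) 1, HasDerivAt F (φ x) x := by
    intro x hx
    obtain ⟨hx0, hx1⟩ := hx
    have hx2 : (0:ℝ) < 1 - x ^ 2 := by nlinarith
    have hsq : 0 < Real.sqrt (1 - x ^ 2) := Real.sqrt_pos.2 hx2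
    have hus : 0 < Real.sqrt (1 - k ^ 2 + k ^ 2 * x ^ 2) := Real.sqrt_pos.2 (hupos x)
    have d1 : HasDerivAt Real.arccos (-(1 / Real.sqrt (1 - x ^ 2))) x :=
      Real.hasDerivAt_arccos (by nlinarith) (ne_of_lt hx1)
    have d2 : HasDerivAt (fun x : ℝ => 1 - k ^ 2 + k ^ 2 * x ^ 2) (k ^ 2 * (2 * x)) x := by
      simpa using ((hasDerivAt_pow 2 x).const_mul (k ^ 2)).const_add (1 - k ^ 2)
    have d3 := d2.sqrt (ne_of_gt (hupos x))
    have d4 := (d1.mul d3).div_const (k ^ 2)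
    have ht : Real.sqrt (1 - k ^ 2 + k ^ 2 * x ^ 2) ^ 2 = 1 - k ^ 2 + k ^ 2 * x ^ 2 :=
      Real.sq_sqrt (hupos x).le
    refine d4.congr_deriv (Eq.symm ?_)
    simp only [hφ, hI, hg]
    have hk : k ≠ 0 := by rintro rfl; simp at hk0
    field_simp
    ring
  -- continuity of F on [0,1]
  have hFcont : ContinuousOn F (Set.Icc 0 1) := by
    apply Continuous.continuousOn
    apply Continuous.div_const
    exact Real.continuous_arccos.mul
      ((continuous_const.add (continuous_const.mul (continuous_pow 2))).sqrt)
  -- integrability of I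
  have hIcont : Continuous I := by
    apply Continuous.div
    · exact (continuous_id.mul Real.continuous_arccos)
    · exact (continuous_const.add (continuous_const.mul (continuous_pow 2))).sqrt
    · intro x; exact ne_of_gt (Real.sqrt_pos.2 (hupos x))
  have hI_int : IntegrableOn I (Set.Ioo (0:ℝ) 1) :=
    (hIcont.integrableOn_Icc).mono_set Set.Ioo_subset_Icc_self
  -- g equals (1/k²) * E-mod integrand on Ioo
  have hgeq : Set.EqOn (fun x => (1/k^2) * Real.sqrt ((1 - k^2 + k^2*x^2)/(1-x^2))) g
      (Set.Ioo (0:ℝ) 1) := by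
    intro x hx
    obtain ⟨hx0, hx1⟩ := hx
    have hx2 : (0:ℝ) < 1 - x ^ 2 := by nlinarith
    have hsq : 0 < Real.sqrt (1 - x ^ 2) := Real.sqrt_pos.2 hx2
    simp only [hg]
    rw [Real.sqrt_div (hupos x).le]
    field_simp
  have hg_int : IntegrableOn g (Set.Ioo (0:ℝ) 1) := by
    have h' : IntegrableOn (fun x => (1/k^2) * Real.sqrt ((1 - k^2 + k^2*x^2)/(1-x^2)))
        (Set.Ioo (0:ℝ) 1) := (intG k hk1).const_mul (1/k^2)
    exact MeasureTheory.IntegrableOn.congr_fun h' hgeq measurableSet_Ioo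
  have hφ_int : IntegrableOn φ (Set.Ioo (0:ℝ) 1) := hI_int.sub hg_int
  have hφ_ii : IntervalIntegrable φ volume 0 1 := by
    rw [intervalIntegrable_iff_integrableOn_Ioo_of_le zero_le_one]
    exact hφ_int
  have hFTC : ∫ x in (0:ℝ)..1, φ x = F 1 - F 0 :=
    intervalIntegral.integral_eq_sub_of_hasDerivAt_of_le zero_le_one hFcont hFderiv hφ_ii
  have hφIoo : ∫ x in Set.Ioo (0:ℝ) 1, φ x = F 1 - F 0 := by
    rw [← MeasureTheory.integral_Ioc_eq_integral_Ioo,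
      ← intervalIntegral.integral_of_le zero_le_one]
    exact hFTC
  have hF1 : F 1 = 0 := by simp [hF, Real.arccos_one]
  have hF0 : F 0 = π / 2 * Real.sqrt (1 - k ^ 2) / k ^ 2 := by
    simp [hF, Real.arccos_zero]
  have hgval : ∫ x in Set.Ioo (0:ℝ) 1, g x
      = (1/k^2) * ∫ x in Set.Ioo (0:ℝ) 1, Real.sqrt ((1 - k^2*x^2)/(1-x^2)) := by
    rw [← setIntegral_congr_fun measurableSet_Ioo hgeq, MeasureTheory.integral_const_mul,
      subG k hk1, subE k hk1]
  have hsplit : ∫ x in Set.Ioo (0:ℝ) 1, I x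
      = (∫ x in Set.Ioo (0:ℝ) 1, φ x) + ∫ x in Set.Ioo (0:ℝ) 1, g x := by
    rw [← MeasureTheory.integral_add hφ_int hg_int]
    apply setIntegral_congr_fun measurableSet_Ioo
    intro x hx
    simp [hφ]
  rw [intervalIntegral.integral_of_le zero_le_one, MeasureTheory.integral_Ioc_eq_integral_Ioo,
    intervalIntegral.integral_of_le zero_le_one, MeasureTheory.integral_Ioc_eq_integral_Ioo]
  rw [hsplit, hφIoo, hF1, hF0, hgval]
  field_simp
  ring
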